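/- For X ~ N(μ, 1/s) with s > 0 and any x > 0, P(X ≥ μ + x) ≥ √(2/π) · exp(−s·x²/2) / (√s·x + √(s·x² + 4)). -/

import Mathlib

open MeasureTheory ProbabilityTheory Set Real

open Filter in
private noncomputable def G (u : ℝ) : ℝ :=
  Real.exp (-u^2/2) * (Real.sqrt (u^2+4) - u) / 2

private noncomputable def G' (u : ℝ) : ℝ :=
  (Real.exp (-u^2/2) * (-u) * (Real.sqrt (u^2+4) - u)
    + Real.exp (-u^2/2) * (u / Real.sqrt (u^2+4) - 1)) / 2

private lemma hasDerivAt_G (u : ℝ) : HasDerivAt G (G' u) u := by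
  have h4 : (0:ℝ) < u^2 + 4 := by positivity
  have h1 : HasDerivAt (fun u : ℝ => u^2+4) (2*u) u := by
    simpa using (hasDerivAt_pow 2 u).add_const 4
  have h2 : HasDerivAt (fun u : ℝ => Real.sqrt (u^2+4)) (u / Real.sqrt (u^2+4)) u := by
    have := (Real.hasDerivAt_sqrt (ne_of_gt h4)).comp u h1
    refine this.congr_deriv ?_
    field_simp
  have h3 : HasDerivAt (fun u : ℝ => -u^2/2) (-u) u := by
    have := ((hasDerivAt_pow 2 u).neg).div_const 2
    refine this.congr_deriv ?_
    push_cast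
    ring
  have h5 : HasDerivAt (fun u : ℝ => Real.exp (-u^2/2)) (Real.exp (-u^2/2) * (-u)) u := by
    simpa using h3.exp
  have h6 := (h5.mul (h2.sub (hasDerivAt_id u))).div_const 2
  exact h6

private lemma G'_nonpos {u : ℝ} (hu : 0 ≤ u) : G' u ≤ 0 := by
  have h4 : (0:ℝ) < u^2 + 4 := by positivity
  have hr : 0 < Real.sqrt (u^2+4) := Real.sqrt_pos.mpr h4
  have hr2 : Real.sqrt (u^2+4) ^ 2 = u^2 + 4 := Real.sq_sqrt h4.le
  set r := Real.sqrt (u^2+4) with hrdef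
  have hA : u^2 * r ≤ u^3 + 3*u + r := by
    refine le_of_pow_le_pow_left₀ two_ne_zero (by positivity) ?_
    nlinarith [hr2, hr.le, hu, mul_nonneg (mul_nonneg hu hu) (mul_nonneg hu hr.le),
      mul_nonneg hu hr.le]
  have hX : (-u) * (r - u) + (u / r - 1) ≤ 0 := by
    have hdiv : u / r ≤ u * (r - u) + 1 := by
      rw [div_le_iff₀ hr]
      nlinarith [hA, hr2]
    linarith
  have he : 0 ≤ Real.exp (-u^2/2) := (Real.exp_pos _).le
  have := mul_nonneg he (neg_nonneg.2 hX)
  unfold G'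
  nlinarith [this]

private lemma neg_G'_le {u : ℝ} (hu : 0 ≤ u) : -G' u ≤ Real.exp (-u^2/2) := by
  have h4 : (0:ℝ) < u^2 + 4 := by positivity
  have hr : 0 < Real.sqrt (u^2+4) := Real.sqrt_pos.mpr h4
  have hr2 : Real.sqrt (u^2+4) ^ 2 = u^2 + 4 := Real.sq_sqrt h4.le
  set r := Real.sqrt (u^2+4) with hrdef
  have hB : u^3 + 3*u ≤ (u^2+1) * r := by
    refine le_of_pow_le_pow_left₀ two_ne_zero (by positivity) ?_
    nlinarith [hr2, hr.le, hu]
  have hX : -((-u) * (r - u) + (u / r - 1)) ≤ 2 := by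
    have hdiv : u * (r - u) - 1 ≤ u / r := by
      rw [le_div_iff₀ hr]
      nlinarith [hB, hr2]
    linarith
  have he : 0 < Real.exp (-u^2/2) := Real.exp_pos _
  have := mul_le_mul_of_nonneg_left hX he.le
  unfold G'
  nlinarith [this]

open Filter in
private lemma G_tendsto : Tendsto G atTop (nhds 0) := by
  have hexp : Tendsto (fun u : ℝ => Real.exp (-u^2/2)) atTop (nhds 0) := by
    apply Real.tendsto_exp_atBot.comp
    have h1 : Tendsto (fun u : ℝ => u^2/2) atTop atTop :=
      (tendsto_pow_atTop two_ne_zero).atTop_div_const (by norm_num)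
    have := tendsto_neg_atTop_atBot.comp h1
    refine this.congr fun u => ?_
    simp [neg_div]
  refine squeeze_zero' ?_ ?_ hexp
  · filter_upwards [eventually_ge_atTop (0:ℝ)] with u hu
    have h1 : u ≤ Real.sqrt (u^2+4) := by
      calc u = Real.sqrt (u^2) := by rw [Real.sqrt_sq hu]
      _ ≤ Real.sqrt (u^2+4) := Real.sqrt_le_sqrt (by linarith)
    have he : 0 ≤ Real.exp (-u^2/2) := (Real.exp_pos _).le
    unfold G
    have := mul_nonneg he (by linarith : (0:ℝ) ≤ Real.sqrt (u^2+4) - u)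
    linarith
  · filter_upwards [eventually_ge_atTop (0:ℝ)] with u hu
    have hle : Real.sqrt (u^2+4) ≤ u + 2 := by
      calc Real.sqrt (u^2+4) ≤ Real.sqrt ((u+2)^2) := Real.sqrt_le_sqrt (by nlinarith)
      _ = u + 2 := Real.sqrt_sq (by linarith)
    have he : 0 ≤ Real.exp (-u^2/2) := (Real.exp_pos _).le
    unfold G
    have := mul_le_mul_of_nonneg_left (by linarith : Real.sqrt (u^2+4) - u ≤ 2) he
    linarith

open Filter in
/-- Gaussian lower tail bound (Abramowitz–Stegun): for `X ~ N(μ, 1/s)` and `x > 0`,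
`P(X ≥ μ + x) ≥ √(2/π) · exp(-s x²/2) / (√s x + √(s x² + 4))`. -/
theorem gaussian_tail_lower_bound (μ x s : ℝ) (hs : 0 < s) (hx : 0 < x) :
    ENNReal.ofReal
        (Real.sqrt (2 / π) * Real.exp (-s * x ^ 2 / 2)
          / (Real.sqrt s * x + Real.sqrt (s * x ^ 2 + 4)))
      ≤ (gaussianReal μ (Real.toNNReal (1 / s))) (Set.Ici (μ + x)) := by
  have hss : 0 < Real.sqrt s := Real.sqrt_pos.mpr hs
  have hs2 : Real.sqrt s ^ 2 = s := Real.sq_sqrt hs.le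
  set v : NNReal := Real.toNNReal (1 / s) with hv
  have hv0 : v ≠ 0 := by
    simp only [hv, ne_eq, Real.toNNReal_eq_zero, not_le]
    positivity
  have hvc : (v : ℝ) = 1 / s := Real.coe_toNNReal _ (by positivity)
  -- the comparison function
  set F : ℝ → ℝ := fun y => (Real.sqrt (2*π))⁻¹ * G (Real.sqrt s * (y - μ)) with hF
  set F' : ℝ → ℝ := fun y => (Real.sqrt (2*π))⁻¹ * (Real.sqrt s * G' (Real.sqrt s * (y - μ)))
    with hF'
  have hpi : 0 < Real.sqrt (2*π) := Real.sqrt_pos.mpr (by positivity)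
  have hFderiv : ∀ y ∈ Ici (μ + x), HasDerivAt F (F' y) y := by
    intro y _
    have hinner : HasDerivAt (fun y : ℝ => Real.sqrt s * (y - μ)) (Real.sqrt s) y := by
      simpa using ((hasDerivAt_id y).sub_const μ).const_mul (Real.sqrt s)
    have := ((hasDerivAt_G (Real.sqrt s * (y - μ))).comp y hinner).const_mul
      (Real.sqrt (2*π))⁻¹
    simpa [hF, hF', mul_comm, mul_assoc, mul_left_comm] using this
  have hF'nonpos : ∀ y ∈ Ioi (μ + x), F' y ≤ 0 := by
    intro y hy
    have hu : 0 ≤ Real.sqrt s * (y - μ) := by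
      have : 0 < y - μ := by simp only [mem_Ioi] at hy; linarith
      positivity
    have := G'_nonpos hu
    have h1 : Real.sqrt s * G' (Real.sqrt s * (y - μ)) ≤ 0 :=
      mul_nonpos_of_nonneg_of_nonpos hss.le this
    exact mul_nonpos_of_nonneg_of_nonpos (by positivity) h1
  have hFlim : Tendsto F atTop (nhds 0) := by
    have harg : Tendsto (fun y : ℝ => Real.sqrt s * (y - μ)) atTop atTop := by
      apply Tendsto.const_mul_atTop hss
      exact tendsto_atTop_add_const_right _ (-μ) tendsto_id
    have := (G_tendsto.comp harg).const_mul (Real.sqrt (2*π))⁻¹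
    simpa [hF, Function.comp] using this
  have hint : IntegrableOn F' (Ioi (μ + x)) :=
    integrableOn_Ioi_deriv_of_nonpos' (fun y hy => hFderiv y hy) hF'nonpos hFlim
  have heq : ∫ y in Ioi (μ + x), F' y = 0 - F (μ + x) :=
    integral_Ioi_of_hasDerivAt_of_nonpos' (fun y hy => hFderiv y hy) hF'nonpos hFlim
  -- compare -F' with the gaussian pdf
  have hpdf_int : IntegrableOn (gaussianPDFReal μ v) (Ioi (μ + x)) :=
    (integrable_gaussianPDFReal μ v).integrableOn
  have hmono : ∫ y in Ioi (μ + x), -F' y ≤ ∫ y in Ioi (μ + x), gaussianPDFReal μ v y := by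
    refine setIntegral_mono_on hint.neg hpdf_int measurableSet_Ioi ?_
    intro y hy
    have hyμ : 0 < y - μ := by simp only [mem_Ioi] at hy; linarith
    have hu : 0 ≤ Real.sqrt s * (y - μ) := by positivity
    have hb := neg_G'_le hu
    have hexp_eq : Real.exp (-(Real.sqrt s * (y - μ))^2/2) = Real.exp (-(y-μ)^2/(2*(v:ℝ))) := by
      rw [hvc]
      congr 1
      rw [mul_pow, hs2]
      field_simp
    have hconst : (Real.sqrt (2*π))⁻¹ * Real.sqrt s = (Real.sqrt (2*π*(v:ℝ)))⁻¹ := by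
      rw [hvc, show 2*π*(1/s) = (2*π)/s from by ring, Real.sqrt_div (by positivity) s]
      field_simp
    calc -F' y = (Real.sqrt (2*π))⁻¹ * Real.sqrt s * (-G' (Real.sqrt s * (y - μ))) := by
          simp only [hF']; ring
      _ ≤ (Real.sqrt (2*π))⁻¹ * Real.sqrt s * Real.exp (-(Real.sqrt s * (y - μ))^2/2) :=
          mul_le_mul_of_nonneg_left hb (by positivity)
      _ = gaussianPDFReal μ v y := by
          rw [hexp_eq, hconst, gaussianPDFReal]
  have hFval : F (μ + x) ≤ ∫ y in Ioi (μ + x), gaussianPDFReal μ v y := by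
    have h2 : ∫ y in Ioi (μ + x), -F' y = F (μ + x) := by
      rw [integral_neg, heq]; ring
    linarith [hmono]
  -- identify F (μ + x) with the stated constant
  have hR : 0 < Real.sqrt (s*x^2+4) := Real.sqrt_pos.mpr (by positivity)
  have hR2 : Real.sqrt (s*x^2+4)^2 = s*x^2+4 := Real.sq_sqrt (by positivity)
  have hsum : Real.sqrt s * x + Real.sqrt (s*x^2+4) ≠ 0 := by positivity
  have h2pi : Real.sqrt (2/π) * Real.sqrt (2*π) = 2 := by
    rw [← Real.sqrt_mul (by positivity),
      show (2:ℝ)/π*(2*π) = 2^2 from by field_simp, Real.sqrt_sq (by norm_num)]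
  have hdiff : (Real.sqrt (s*x^2+4) - Real.sqrt s * x) * (Real.sqrt (s*x^2+4) + Real.sqrt s * x)
      = 4 := by nlinarith [hR2, mul_pow (Real.sqrt s) x 2, hs2]
  have hpi' : Real.sqrt (2*π) ≠ 0 := ne_of_gt hpi
  have hFeq : F (μ + x) = Real.sqrt (2 / π) * Real.exp (-s * x ^ 2 / 2)
      / (Real.sqrt s * x + Real.sqrt (s * x ^ 2 + 4)) := by
    rw [hF]
    show (Real.sqrt (2*π))⁻¹ * G (Real.sqrt s * (μ + x - μ)) = _
    rw [show μ + x - μ = x from by ring, G,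
      show (Real.sqrt s * x)^2 = s*x^2 from by rw [mul_pow, hs2]]
    rw [eq_div_iff hsum]
    field_simp
    ring_nf
    rw [Real.sq_sqrt (show (0:ℝ) ≤ 4+s*x^2 by positivity), hs2]
    rw [show π*2 = 2*π by ring, show π⁻¹*2 = 2/π by ring]
    linear_combination (-2) * h2pi
  -- conclude
  rw [gaussianReal_apply_eq_integral μ hv0, integral_Ici_eq_integral_Ioi]
  refine ENNReal.ofReal_le_ofReal ?_
  rw [← hFeq]
  exact hFval
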